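/- Let K = k1/k2 ∈ E(y) be a nonzero differential-reduced rational function with gcd(k1,k2)=1. Then the E-linear map φ_K : E[y] → E[y] sending p to k2·D(p) + k1·p is injective. -/
import Mathlib


open Polynomial

/-- `K = k1/k2` is differential-reduced: `gcd(k2, k1 - i·D(k2)) = 1` for all integers `i`. -/
def DiffReduced {E : Type*} [Field E] (k1 k2 : E[X]) : Prop :=
  ∀ i : ℤ, IsCoprime k2 (k1 - (i : E[X]) * derivative k2)

/-- The derivation `d/dy` on the field of rational functions `E(y)`. -/
noncomputable def Dr {E : Type*} [Field E] (f : RatFunc E) : RatFunc E :=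
  (algebraMap E[X] (RatFunc E) (derivative f.num) * algebraMap E[X] (RatFunc E) f.denom -
      algebraMap E[X] (RatFunc E) f.num * algebraMap E[X] (RatFunc E) (derivative f.denom)) /
    (algebraMap E[X] (RatFunc E) f.denom) ^ 2

private theorem aux_descent {E : Type*} [Field E] [CharZero E] (k2 : E[X]) (hk2 : k2 ≠ 0) :
    ∀ n : ℕ, ∀ k1 p : E[X], p.natDegree ≤ n → k1 ≠ 0 →
      IsCoprime k1 k2 → DiffReduced k1 k2 →
      k2 * derivative p + k1 * p = 0 → p = 0 := by
  intro n
  induction n with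
  | zero =>
    intro k1 p hdeg hk1 hcop hdr heq
    have hp0 : derivative p = 0 := by
      rw [Polynomial.eq_C_of_natDegree_eq_zero (Nat.le_zero.mp hdeg)]
      exact derivative_C
    rw [hp0, mul_zero, zero_add] at heq
    exact (mul_eq_zero.mp heq).elim (fun h => absurd h hk1) id
  | succ m ih =>
    intro k1 p hdeg hk1 hcop hdr heq
    by_cases hp : p = 0
    · exact hp
    exfalso
    by_cases hc : k2.natDegree = 0
    · -- k2 is a nonzero constant
      by_cases hdp : derivative p = 0
      · rw [hdp, mul_zero, zero_add] at heq
        exact (mul_eq_zero.mp heq).elim (fun h => absurd h hk1) (fun h => absurd h hp)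
      · have hpnd : p.natDegree ≠ 0 := by
          intro h0
          apply hdp
          rw [Polynomial.eq_C_of_natDegree_eq_zero h0]
          exact derivative_C
        have hplt : (derivative p).natDegree < p.natDegree :=
          Polynomial.natDegree_derivative_lt hpnd
        have h1 : k2 * derivative p = -(k1 * p) := by linear_combination heq
        have hd1 : (k2 * derivative p).natDegree = (derivative p).natDegree := by
          rw [Polynomial.natDegree_mul hk2 hdp, hc, zero_add]
        have hd2 : (-(k1 * p)).natDegree = k1.natDegree + p.natDegree := by
          rw [natDegree_neg, Polynomial.natDegree_mul hk1 hp]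
        rw [h1, hd2] at hd1
        omega
    · -- k2 nonconstant
      have hdvd : k2 ∣ k1 * p := ⟨-derivative p, by linear_combination heq⟩
      obtain ⟨q, hq⟩ := (hcop.symm).dvd_of_dvd_mul_left hdvd
      have hqne : q ≠ 0 := by
        rintro rfl
        rw [mul_zero] at hq
        exact hp hq
      have hk1'ne : k1 + derivative k2 ≠ 0 := by
        intro h0
        have h := hdr (-1)
        have : k1 - ((-1 : ℤ) : E[X]) * derivative k2 = 0 := by push_cast; linear_combination h0
        rw [this] at h
        have := Polynomial.natDegree_eq_zero_of_isUnit (isCoprime_zero_right.mp h)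
        exact hc this
      have heq' : k2 * derivative q + (k1 + derivative k2) * q = 0 := by
        have hkey : k2 * (k2 * derivative q + (k1 + derivative k2) * q) = 0 := by
          have hdp : derivative p = derivative k2 * q + k2 * derivative q := by
            rw [hq, derivative_mul]
          rw [hdp, hq] at heq
          linear_combination heq
        exact (mul_eq_zero.mp hkey).elim (fun h => absurd h hk2) id
      have hcop' : IsCoprime (k1 + derivative k2) k2 := by
        have h := hdr (-1)
        have : k1 - ((-1 : ℤ) : E[X]) * derivative k2 = k1 + derivative k2 := by
          push_cast; ring
        rw [this] at h
        exact h.symm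
      have hdr' : DiffReduced (k1 + derivative k2) k2 := by
        intro i
        have h := hdr (i - 1)
        have : k1 - ((i - 1 : ℤ) : E[X]) * derivative k2
            = k1 + derivative k2 - ((i : ℤ) : E[X]) * derivative k2 := by
          push_cast; ring
        rw [this] at h
        exact h
      have hdegq : q.natDegree ≤ m := by
        have hnd : p.natDegree = k2.natDegree + q.natDegree := by
          rw [hq, Polynomial.natDegree_mul hk2 hqne]
        omega
      exact hqne (ih (k1 + derivative k2) q hdegq hk1'ne hcop' hdr' heq')

theorem stmt_1 {E : Type*} [Field E] [CharZero E] (k1 k2 : E[X]) (hk1 : k1 ≠ 0)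
    (hk2 : k2 ≠ 0) (hcop : IsCoprime k1 k2) (hdr : DiffReduced k1 k2) :
    Function.Injective fun p : E[X] => k2 * derivative p + k1 * p := by
  intro p q h
  simp only at h
  have h0 : k2 * derivative (p - q) + k1 * (p - q) = 0 := by
    rw [derivative_sub]
    linear_combination h
  have := aux_descent k2 hk2 (p - q).natDegree k1 (p - q) le_rfl hk1 hcop hdr h0
  exact sub_eq_zero.mp this
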